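/- Let G be a finite undirected graph with normalized Laplacian second-smallest eigenvalue λ₂, and W a subset of vertices. Then the number of edges internal to W satisfies E(W) ≤ (1/2) · vol(W) · (1 − λ₂ · (1 − vol(W)/vol(G))). -/

import Mathlib

open Finset

open Matrix

/-- Normalized Laplacian `L = I − D^{-1/2} A D^{-1/2}` of a finite simple graph. -/
noncomputable def normLap {V : Type*} [Fintype V] [DecidableEq V]
    (G : SimpleGraph V) [DecidableRel G.Adj] : Matrix V V ℝ :=
  let Dh : Matrix V V ℝ :=
    Matrix.diagonal fun v => if G.degree v = 0 then 0 else (Real.sqrt (G.degree v))⁻¹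
  1 - Dh * G.adjMatrix ℝ * Dh

/-- The second smallest eigenvalue (with multiplicity) of a Hermitian real matrix. -/
noncomputable def secondEig {V : Type*} [Fintype V] [DecidableEq V]
    (M : Matrix V V ℝ) (hM : M.IsHermitian) : ℝ :=
  ((Finset.univ.val.map hM.eigenvalues).sort (· ≤ ·)).getD 1 0

lemma aux_unique_lt {V : Type*} [Fintype V] [DecidableEq V]
    (f : V → ℝ) (hcard : 2 ≤ Fintype.card V) {lam : ℝ}
    (hlam : lam = ((Finset.univ.val.map f).sort (· ≤ ·)).getD 1 0)
    {i j : V} (hi : f i < lam) (hj : f j < lam) : i = j := by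
  classical
  by_contra hne
  set msf : Multiset ℝ := Finset.univ.val.map f with hm
  set l : List ℝ := msf.sort (· ≤ ·) with hl
  have hlen : l.length = Fintype.card V := by
    simp [hl, Multiset.length_sort, hm]
  have h1 : 1 < l.length := by omega
  have hget : lam = l[1] := by
    rw [hlam, List.getD_eq_getElem l 0 h1]
  have hsorted : l.Pairwise (· ≤ ·) := Multiset.pairwise_sort _ _
  -- upper bound on count
  have hcount_le : msf.countP (fun a => a < lam) ≤ 1 := by
    have hml : msf = (l : Multiset ℝ) := (Multiset.sort_eq _ _).symm
    rw [hml, Multiset.coe_countP, List.countP_eq_length_filter]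
    have hsplit : l = l.take 1 ++ l.drop 1 := (List.take_append_drop 1 l).symm
    have hdropnil : (l.drop 1).filter (fun a => decide (a < lam)) = [] := by
      apply List.filter_eq_nil_iff.mpr
      intro a ha
      obtain ⟨k, hk, hka⟩ := List.getElem_of_mem ha
      have hk' : 1 + k < l.length := by
        have : k < l.length - 1 := by simpa using hk
        omega
      have : l[1] ≤ l[1 + k] := by
        have := hsorted.rel_get_of_le (a := ⟨1, h1⟩) (b := ⟨1 + k, hk'⟩) (by simp)
        simpa using this
      rw [List.getElem_drop] at hka
      simp only [decide_eq_true_eq]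
      rw [← hka]
      rw [hget]
      exact not_lt.mpr this
    calc (l.filter (fun a => decide (a < lam))).length
        = ((l.take 1 ++ l.drop 1).filter (fun a => decide (a < lam))).length := by rw [← hsplit]
      _ = ((l.take 1).filter _).length + ((l.drop 1).filter _).length := by
          rw [List.filter_append, List.length_append]
      _ ≤ (l.take 1).length + 0 := by
          rw [hdropnil]; simpa using List.length_filter_le _ (l.take 1)
      _ ≤ 1 := by simp [List.length_take]
  have hcount_ge : 2 ≤ msf.countP (fun a => a < lam) := by
    rw [hm, Multiset.countP_map]
    have hsub : ({i, j} : Finset V) ⊆ Finset.univ.filter (fun a => f a < lam) := by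
      intro a ha
      simp only [Finset.mem_insert, Finset.mem_singleton] at ha
      rcases ha with rfl | rfl <;> simp [hi, hj]
    calc (2 : ℕ) = ({i, j} : Finset V).card := (Finset.card_pair hne).symm
      _ ≤ (Finset.univ.filter (fun a => f a < lam)).card := Finset.card_le_card hsub
      _ = Multiset.card (Finset.univ.val.filter (fun a => f a < lam)) := by
          rw [← Finset.filter_val]; rfl
  omega




lemma dot_mulVec_symm {V : Type*} [Fintype V] {M : Matrix V V ℝ}
    (hM : M.IsHermitian) (v w : V → ℝ) : v ⬝ᵥ (M *ᵥ w) = (M *ᵥ v) ⬝ᵥ w := by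
  have hij : ∀ i j, M i j = M j i := fun i j => by
    conv_lhs => rw [← hM]
    simp [Matrix.conjTranspose_apply]
  simp only [Matrix.mulVec, dotProduct, Finset.mul_sum, Finset.sum_mul]
  rw [Finset.sum_comm]
  apply Finset.sum_congr rfl; intro i _
  apply Finset.sum_congr rfl; intro j _
  rw [hij i j]; ring

lemma rayleigh_second {V : Type*} [Fintype V] [DecidableEq V]
    {M : Matrix V V ℝ} (hM : M.IsHermitian) (hPSD : M.PosSemidef)
    (hcard : 2 ≤ Fintype.card V) {x y : V → ℝ} (hy : y ≠ 0)
    (hMy : M *ᵥ y = 0) (hyx : y ⬝ᵥ x = 0) :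
    secondEig M hM * (x ⬝ᵥ x) ≤ x ⬝ᵥ (M *ᵥ x) := by
  classical
  set lam := secondEig M hM with hlam
  set e : (V → ℝ) ≃ EuclideanSpace ℝ V := (WithLp.equiv 2 (V → ℝ)).symm with he
  set u : V → V → ℝ := fun i => (WithLp.equiv 2 (V → ℝ)) (hM.eigenvectorBasis i) with hu
  set μ : V → ℝ := hM.eigenvalues with hmu
  have hbe : ∀ j, M *ᵥ u j = μ j • u j := fun j => hM.mulVec_eigenvectorBasis j
  have hedot : ∀ v w : V → ℝ, (inner ℝ (e v) (e w) : ℝ) = v ⬝ᵥ w := by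
    intro v w
    simp [he, PiLp.inner_apply, RCLike.inner_apply, dotProduct, mul_comm]
  have hpar : ∀ v w : V → ℝ, v ⬝ᵥ w = ∑ i, (u i ⬝ᵥ v) * (u i ⬝ᵥ w) := by
    intro v w
    have h1 : (inner ℝ (e v) (e w) : ℝ)
        = inner ℝ (hM.eigenvectorBasis.repr (e v)) (hM.eigenvectorBasis.repr (e w)) :=
      (hM.eigenvectorBasis.repr.inner_map_map (e v) (e w)).symm
    rw [hedot] at h1
    rw [h1, PiLp.inner_apply]
    apply Finset.sum_congr rfl; intro i _
    rw [hM.eigenvectorBasis.repr_apply_apply, hM.eigenvectorBasis.repr_apply_apply]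
    have h2 : (inner ℝ (hM.eigenvectorBasis i) (e v) : ℝ) = u i ⬝ᵥ v := hedot (u i) v
    have h3 : (inner ℝ (hM.eigenvectorBasis i) (e w) : ℝ) = u i ⬝ᵥ w := hedot (u i) w
    rw [h2, h3]
    simp [RCLike.inner_apply]; ring
  have heig : ∀ i, u i ⬝ᵥ (M *ᵥ x) = μ i * (u i ⬝ᵥ x) := by
    intro i
    rw [dot_mulVec_symm hM, hbe i, smul_dotProduct]
    rfl
  have hdzero : ∀ i, μ i * (u i ⬝ᵥ y) = 0 := by
    intro i
    have h0 : u i ⬝ᵥ (M *ᵥ y) = 0 := by rw [hMy, dotProduct_zero]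
    rw [dot_mulVec_symm hM, hbe i, smul_dotProduct] at h0
    exact h0
  obtain ⟨i₀, hi₀⟩ : ∃ i, u i ⬝ᵥ y ≠ 0 := by
    by_contra h
    push_neg at h
    have hyy : y ⬝ᵥ y = 0 := by rw [hpar y y]; simp [h]
    apply hy
    funext a
    have hs : ∑ i, y i * y i = 0 := hyy
    have h0 : ∀ i ∈ Finset.univ, (0:ℝ) ≤ y i * y i := fun i _ => mul_self_nonneg _
    exact mul_self_eq_zero.mp ((Finset.sum_eq_zero_iff_of_nonneg h0).mp hs a (Finset.mem_univ a))
  have hmu0 : μ i₀ = 0 := by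
    rcases mul_eq_zero.mp (hdzero i₀) with h | h
    · exact h
    · exact absurd h hi₀
  have hnn : ∀ i, 0 ≤ μ i := fun i => hPSD.eigenvalues_nonneg i
  have hczero : ∀ i, μ i < lam → u i ⬝ᵥ x = 0 := by
    intro i hilt
    have hlam0 : 0 < lam := lt_of_le_of_lt (hnn i) hilt
    have hi0lt : μ i₀ < lam := by rw [hmu0]; exact hlam0
    have hii0 : i = i₀ := aux_unique_lt μ hcard hlam hilt hi0lt
    have hdother : ∀ j, j ≠ i₀ → u j ⬝ᵥ y = 0 := by
      intro j hj
      by_contra hdj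
      have hmuj : μ j = 0 := by
        rcases mul_eq_zero.mp (hdzero j) with h | h
        · exact h
        · exact absurd h hdj
      exact hj (aux_unique_lt μ hcard hlam (hmuj ▸ hlam0) hi0lt)
    have hsum : ∑ j, (u j ⬝ᵥ y) * (u j ⬝ᵥ x) = 0 := by rw [← hpar y x]; exact hyx
    have hd0c : (u i₀ ⬝ᵥ y) * (u i₀ ⬝ᵥ x) = 0 := by
      rw [← hsum, Finset.sum_eq_single i₀]
      · intro j _ hj; rw [hdother j hj, zero_mul]
      · intro h; exact absurd (Finset.mem_univ i₀) h
    rcases mul_eq_zero.mp hd0c with h | h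
    · exact absurd h hi₀
    · rw [hii0]; exact h
  rw [hpar x x, hpar x (M *ᵥ x), Finset.mul_sum]
  apply Finset.sum_le_sum
  intro i _
  rw [heig i]
  rcases lt_or_ge (μ i) lam with h | h
  · rw [hczero i h]; simp
  · have := mul_le_mul_of_nonneg_right h (mul_self_nonneg (u i ⬝ᵥ x))
    calc lam * ((u i ⬝ᵥ x) * (u i ⬝ᵥ x)) ≤ μ i * ((u i ⬝ᵥ x) * (u i ⬝ᵥ x)) := this
      _ = (u i ⬝ᵥ x) * (μ i * (u i ⬝ᵥ x)) := by ring



noncomputable def dhf {V : Type*} [Fintype V] [DecidableEq V]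
    (G : SimpleGraph V) [DecidableRel G.Adj] : V → ℝ :=
  fun v => if G.degree v = 0 then 0 else (Real.sqrt (G.degree v))⁻¹

lemma normLap_mulVec_apply {V : Type*} [Fintype V] [DecidableEq V]
    (G : SimpleGraph V) [DecidableRel G.Adj] (v : V → ℝ) (a : V) :
    (normLap G *ᵥ v) a =
      v a - dhf G a * ∑ u, (if G.Adj a u then (1:ℝ) else 0) * (dhf G u * v u) := by
  simp only [normLap, Matrix.sub_mulVec, Matrix.one_mulVec, Pi.sub_apply]
  congr 1
  rw [← Matrix.mulVec_mulVec, ← Matrix.mulVec_mulVec]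
  rw [Matrix.mulVec_diagonal]
  congr 1
  simp only [Matrix.mulVec, dotProduct, SimpleGraph.adjMatrix_apply]
  apply Finset.sum_congr rfl; intro u _
  congr 1
  simp [Matrix.diagonal_apply, ite_mul, dhf]

lemma degree_sum_row {V : Type*} [Fintype V] [DecidableEq V]
    (G : SimpleGraph V) [DecidableRel G.Adj] (a : V) :
    ∑ u, (if G.Adj a u then (1:ℝ) else 0) = (G.degree a : ℝ) := by
  rw [Finset.sum_boole]
  congr 1
  rw [SimpleGraph.degree]
  congr 1
  ext u
  simp [SimpleGraph.mem_neighborFinset]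

lemma adj_degree_ne_zero {V : Type*} [Fintype V] [DecidableEq V]
    {G : SimpleGraph V} [DecidableRel G.Adj] {a u : V} (h : G.Adj a u) :
    G.degree a ≠ 0 := by
  have : 0 < G.degree a := by
    rw [SimpleGraph.degree_pos_iff_exists_adj]
    exact ⟨u, h⟩
  omega

lemma dhf_mul_sqrt {V : Type*} [Fintype V] [DecidableEq V]
    (G : SimpleGraph V) [DecidableRel G.Adj] (u : V) :
    dhf G u * Real.sqrt (G.degree u) = if G.degree u = 0 then 0 else 1 := by
  rw [dhf]
  split_ifs with h
  · rw [zero_mul]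
  · apply inv_mul_cancel₀
    rw [Real.sqrt_ne_zero']
    have : 0 < G.degree u := Nat.pos_of_ne_zero h
    exact_mod_cast this

lemma normLap_mulVec_sqrtDeg {V : Type*} [Fintype V] [DecidableEq V]
    (G : SimpleGraph V) [DecidableRel G.Adj] :
    normLap G *ᵥ (fun v => Real.sqrt (G.degree v)) = 0 := by
  funext a
  rw [Pi.zero_apply, normLap_mulVec_apply]
  have hterm : ∀ u, (if G.Adj a u then (1:ℝ) else 0) * (dhf G u * Real.sqrt (G.degree u))
      = if G.Adj a u then (1:ℝ) else 0 := by
    intro u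
    rw [dhf_mul_sqrt]
    split_ifs with h1 h2
    · exact absurd h2 (adj_degree_ne_zero h1.symm)
    · rw [one_mul]
    · rw [zero_mul]
    · rw [zero_mul]
  rw [Finset.sum_congr rfl (fun u _ => hterm u), degree_sum_row]
  rw [dhf]
  split_ifs with h
  · simp [h]
  · have hd : (0:ℝ) < (G.degree a : ℝ) := by
      have : 0 < G.degree a := Nat.pos_of_ne_zero h
      exact_mod_cast this
    rw [sub_eq_zero]
    rw [inv_mul_eq_div, eq_div_iff (by positivity : Real.sqrt (G.degree a) ≠ 0)]
    rw [Real.mul_self_sqrt hd.le]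

lemma dot_normLap {V : Type*} [Fintype V] [DecidableEq V]
    (G : SimpleGraph V) [DecidableRel G.Adj] (x : V → ℝ) :
    x ⬝ᵥ (normLap G *ᵥ x) = (∑ a, x a * x a)
      - ∑ a, ∑ u, (if G.Adj a u then (1:ℝ) else 0) *
          ((dhf G a * x a) * (dhf G u * x u)) := by
  simp only [dotProduct]
  rw [← Finset.sum_sub_distrib]
  apply Finset.sum_congr rfl; intro a _
  rw [normLap_mulVec_apply, mul_sub]
  congr 1
  rw [Finset.mul_sum, Finset.mul_sum]
  apply Finset.sum_congr rfl; intro u _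
  ring

lemma dhf_sq_deg {V : Type*} [Fintype V] [DecidableEq V]
    (G : SimpleGraph V) [DecidableRel G.Adj] {a : V} (h : G.degree a ≠ 0) :
    dhf G a * dhf G a * (G.degree a : ℝ) = 1 := by
  have hd : (0:ℝ) < (G.degree a : ℝ) := by
    have : 0 < G.degree a := Nat.pos_of_ne_zero h
    exact_mod_cast this
  have hs : Real.sqrt (G.degree a) ≠ 0 := by positivity
  rw [dhf, if_neg h]
  have hss := Real.mul_self_sqrt hd.le
  rw [← hss]
  have hs' : Real.sqrt ((G.degree a : ℝ)) ≠ 0 := hs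
  field_simp
  rw [Real.sqrt_sq (Real.sqrt_nonneg _)]

lemma deg_mul_dhf_sq_le {V : Type*} [Fintype V] [DecidableEq V]
    (G : SimpleGraph V) [DecidableRel G.Adj] (a : V) (x : V → ℝ) :
    (G.degree a : ℝ) * ((dhf G a * x a) * (dhf G a * x a)) ≤ x a * x a := by
  by_cases h : G.degree a = 0
  · rw [dhf, if_pos h]
    simpa using mul_self_nonneg (x a)
  · have := dhf_sq_deg G h
    apply le_of_eq
    calc (G.degree a : ℝ) * ((dhf G a * x a) * (dhf G a * x a))
        = (dhf G a * dhf G a * (G.degree a : ℝ)) * (x a * x a) := by ring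
      _ = x a * x a := by rw [this, one_mul]

lemma normLap_posSemidef {V : Type*} [Fintype V] [DecidableEq V]
    (G : SimpleGraph V) [DecidableRel G.Adj] (hL : (normLap G).IsHermitian) :
    (normLap G).PosSemidef := by
  refine Matrix.PosSemidef.of_dotProduct_mulVec_nonneg hL ?_
  intro x
  have hstar : star x = x := by funext a; simp
  rw [hstar, dot_normLap]
  set z : V → ℝ := fun a => dhf G a * x a with hz
  rw [sub_nonneg]
  have step1 : ∑ a, ∑ u, (if G.Adj a u then (1:ℝ) else 0) * (z a * z u)
      ≤ ∑ a, ∑ u, ((if G.Adj a u then (1:ℝ) else 0) * (z a * z a)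
        + (if G.Adj a u then (1:ℝ) else 0) * (z u * z u)) / 2 := by
    apply Finset.sum_le_sum; intro a _
    apply Finset.sum_le_sum; intro u _
    split_ifs with h
    · nlinarith [sq_nonneg (z a - z u)]
    · simp
  have hrow : ∀ a, ∑ u, (if G.Adj a u then (1:ℝ) else 0) * (z a * z a)
      = (G.degree a : ℝ) * (z a * z a) := by
    intro a
    rw [← Finset.sum_mul, degree_sum_row]
  have hcol : ∀ u, ∑ a, (if G.Adj a u then (1:ℝ) else 0) * (z u * z u)
      = (G.degree u : ℝ) * (z u * z u) := by
    intro u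
    rw [← Finset.sum_mul]
    congr 1
    rw [← degree_sum_row G u]
    apply Finset.sum_congr rfl; intro a _
    congr 1
    simp [SimpleGraph.adj_comm]
  have step2 : ∑ a, ∑ u, ((if G.Adj a u then (1:ℝ) else 0) * (z a * z a)
        + (if G.Adj a u then (1:ℝ) else 0) * (z u * z u)) / 2
      = ∑ a, (G.degree a : ℝ) * (z a * z a) := by
    have e1 : ∀ a, ∑ u, ((if G.Adj a u then (1:ℝ) else 0) * (z a * z a)
        + (if G.Adj a u then (1:ℝ) else 0) * (z u * z u)) / 2
        = ((G.degree a : ℝ) * (z a * z a)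
          + ∑ u, (if G.Adj a u then (1:ℝ) else 0) * (z u * z u)) / 2 := by
      intro a
      rw [← Finset.sum_div, Finset.sum_add_distrib, hrow]
    rw [Finset.sum_congr rfl (fun a _ => e1 a)]
    rw [← Finset.sum_div, Finset.sum_add_distrib]
    rw [Finset.sum_comm]
    rw [Finset.sum_congr rfl (fun u _ => hcol u)]
    ring
  have step3 : ∑ a, (G.degree a : ℝ) * (z a * z a) ≤ ∑ a, x a * x a := by
    apply Finset.sum_le_sum; intro a _
    exact deg_mul_dhf_sq_le G a x
  calc ∑ a, ∑ u, (if G.Adj a u then (1:ℝ) else 0) * (z a * z u)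
      ≤ ∑ a, ∑ u, ((if G.Adj a u then (1:ℝ) else 0) * (z a * z a)
        + (if G.Adj a u then (1:ℝ) else 0) * (z u * z u)) / 2 := step1
    _ = ∑ a, (G.degree a : ℝ) * (z a * z a) := step2
    _ ≤ ∑ a, x a * x a := step3

/-- the number of edges internal to `W` (counted here as half the number
of ordered adjacent pairs inside `W`) satisfies
`E(W) ≤ (1/2)·vol(W)·(1 − λ₂·(1 − vol(W)/vol(G)))`. -/
theorem stmt_1 {V : Type*} [Fintype V] [DecidableEq V]
    (G : SimpleGraph V) [DecidableRel G.Adj]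
    (hL : (normLap G).IsHermitian) (lam2 : ℝ) (hlam : lam2 = secondEig (normLap G) hL)
    (W : Finset V) :
    ((Finset.univ.filter fun p : V × V => G.Adj p.1 p.2 ∧ p.1 ∈ W ∧ p.2 ∈ W).card : ℝ) / 2 ≤
      (1 / 2) * (∑ v ∈ W, (G.degree v : ℝ)) *
        (1 - lam2 * (1 - (∑ v ∈ W, (G.degree v : ℝ)) / (∑ v : V, (G.degree v : ℝ)))) := by
  classical
  set y : V → ℝ := fun v => Real.sqrt (G.degree v) with hy
  set g : V → ℝ := fun v => if v ∈ W then Real.sqrt (G.degree v) else 0 with hg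
  set w : ℝ := ∑ v ∈ W, (G.degree v : ℝ) with hw
  set m : ℝ := ∑ v : V, (G.degree v : ℝ) with hm
  set F : ℝ := ((Finset.univ.filter fun p : V × V =>
      G.Adj p.1 p.2 ∧ p.1 ∈ W ∧ p.2 ∈ W).card : ℝ) with hF
  by_cases hm0 : m = 0
  · -- degenerate case : no edges at all
    have hdeg : ∀ v, (G.degree v : ℝ) = 0 := by
      intro v
      have h0 : ∀ i ∈ Finset.univ, (0:ℝ) ≤ (G.degree i : ℝ) := fun i _ => by positivity
      exact (Finset.sum_eq_zero_iff_of_nonneg h0).mp (hm ▸ hm0) v (Finset.mem_univ v)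
    have hw0 : w = 0 := by
      rw [hw]
      exact Finset.sum_eq_zero fun v _ => hdeg v
    have hF0 : F = 0 := by
      rw [hF, Nat.cast_eq_zero, Finset.card_eq_zero, Finset.filter_eq_empty_iff]
      rintro p _ ⟨hadj, _, _⟩
      have := adj_degree_ne_zero hadj
      have := hdeg p.1
      simp_all
    rw [hF0, hw0]
    norm_num
  · -- main case
    have hmnn : ∀ i ∈ Finset.univ, (0:ℝ) ≤ (G.degree i : ℝ) := fun i _ => by positivity
    obtain ⟨v₀, hv₀⟩ : ∃ v, G.degree v ≠ 0 := by
      by_contra h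
      push_neg at h
      exact hm0 (by rw [hm]; exact Finset.sum_eq_zero fun v _ => by rw [h v, Nat.cast_zero])
    obtain ⟨u₀, hadj₀⟩ : ∃ u, G.Adj v₀ u :=
      (G.degree_pos_iff_exists_adj v₀).mp (Nat.pos_of_ne_zero hv₀)
    have : Nontrivial V := ⟨⟨v₀, u₀, G.ne_of_adj hadj₀⟩⟩
    have hcard : 2 ≤ Fintype.card V := Fintype.one_lt_card
    have hy0 : y ≠ 0 := by
      intro h
      have h1 : y v₀ = 0 := by rw [h]; rfl
      rw [hy, Real.sqrt_eq_zero'] at h1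
      have h2 : (G.degree v₀ : ℝ) = 0 := le_antisymm h1 (Nat.cast_nonneg _)
      exact hv₀ (by exact_mod_cast h2)
    set t : ℝ := w / m with ht
    set x : V → ℝ := fun a => g a - t * y a with hx
    have hlinR : ∀ (p q r : V → ℝ) (s : ℝ),
        p ⬝ᵥ (fun a => q a - s * r a) = p ⬝ᵥ q - s * (p ⬝ᵥ r) := by
      intro p q r s
      simp only [dotProduct, mul_sub, Finset.sum_sub_distrib, Finset.mul_sum]
      congr 1
      apply Finset.sum_congr rfl; intros; ring
    have hlinL : ∀ (p q r : V → ℝ) (s : ℝ),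
        (fun a => q a - s * r a) ⬝ᵥ p = q ⬝ᵥ p - s * (r ⬝ᵥ p) := by
      intro p q r s
      simp only [dotProduct, sub_mul, Finset.sum_sub_distrib, Finset.mul_sum]
      congr 1
      apply Finset.sum_congr rfl; intros; ring
    have hyy : y ⬝ᵥ y = m := by
      rw [hm, dotProduct]
      apply Finset.sum_congr rfl; intro v _
      exact Real.mul_self_sqrt (by positivity)
    have hsq : ∀ v, y v * y v = (G.degree v : ℝ) := fun v =>
      Real.mul_self_sqrt (by positivity)
    have hyg : y ⬝ᵥ g = w := by
      rw [hw, dotProduct]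
      have : ∀ v, y v * g v = if v ∈ W then (G.degree v : ℝ) else 0 := by
        intro v
        rw [hg]
        by_cases hW : v ∈ W
        · simp only [hW, if_true]; exact hsq v
        · simp [hW]
      rw [Finset.sum_congr rfl (fun v _ => this v)]
      simp [Finset.sum_ite_mem]
    have hgy : g ⬝ᵥ y = w := by
      rw [hw, dotProduct]
      have : ∀ v, g v * y v = if v ∈ W then (G.degree v : ℝ) else 0 := by
        intro v
        rw [hg]
        by_cases hW : v ∈ W
        · simp only [hW, if_true]; exact hsq v
        · simp [hW]
      rw [Finset.sum_congr rfl (fun v _ => this v)]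
      simp [Finset.sum_ite_mem]
    have hgg : g ⬝ᵥ g = w := by
      rw [hw, dotProduct]
      have : ∀ v, g v * g v = if v ∈ W then (G.degree v : ℝ) else 0 := by
        intro v
        rw [hg]
        by_cases hW : v ∈ W
        · simp only [hW, if_true]; exact hsq v
        · simp [hW]
      rw [Finset.sum_congr rfl (fun v _ => this v)]
      simp [Finset.sum_ite_mem]
    have hLy : normLap G *ᵥ y = 0 := by
      rw [hy]; exact normLap_mulVec_sqrtDeg G
    have hFsum : ∑ a, ∑ u, (if G.Adj a u then (1:ℝ) else 0) *
        ((dhf G a * g a) * (dhf G u * g u)) = F := by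
      have hterm : ∀ a u, (if G.Adj a u then (1:ℝ) else 0) *
          ((dhf G a * g a) * (dhf G u * g u))
          = if (G.Adj a u ∧ a ∈ W ∧ u ∈ W) then 1 else 0 := by
        intro a u
        by_cases hadj : G.Adj a u
        · have hda := adj_degree_ne_zero hadj
          have hdu := adj_degree_ne_zero hadj.symm
          have h1 : dhf G a * g a = if a ∈ W then 1 else 0 := by
            rw [hg]
            by_cases hW : a ∈ W
            · simp only [hW, if_true]
              rw [dhf_mul_sqrt, if_neg hda]
            · simp [hW]
          have h2 : dhf G u * g u = if u ∈ W then 1 else 0 := by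
            rw [hg]
            by_cases hW : u ∈ W
            · simp only [hW, if_true]
              rw [dhf_mul_sqrt, if_neg hdu]
            · simp [hW]
          rw [h1, h2]
          by_cases hWa : a ∈ W <;> by_cases hWu : u ∈ W <;> simp [hadj, hWa, hWu]
        · simp [hadj]
      rw [Finset.sum_congr rfl (fun a _ =>
        Finset.sum_congr rfl (fun u _ => hterm a u))]
      rw [hF, ← Fintype.sum_prod_type', Finset.sum_boole]
    have hgLg : g ⬝ᵥ (normLap G *ᵥ g) = w - F := by
      rw [dot_normLap, hFsum]
      have hgg' : (∑ a, g a * g a) = w := hgg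
      rw [hgg']
    have hxeq : x = g - t • y := by
      funext a
      rw [hx]
      simp
    have hLx : normLap G *ᵥ x = normLap G *ᵥ g := by
      rw [hxeq, Matrix.mulVec_sub, Matrix.mulVec_smul, hLy, smul_zero, sub_zero]
    have hyLg : y ⬝ᵥ (normLap G *ᵥ g) = 0 := by
      rw [dot_mulVec_symm hL, hLy, zero_dotProduct]
    have hxLx : x ⬝ᵥ (normLap G *ᵥ x) = w - F := by
      rw [hLx, hx, hlinL (normLap G *ᵥ g) g y t, hyLg, hgLg]
      ring
    have hyx : y ⬝ᵥ x = 0 := by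
      rw [hx, hlinR y g y t, hyg, hyy, ht]
      field_simp
      ring
    have hxx : x ⬝ᵥ x = w * (1 - w / m) := by
      have e1 : x ⬝ᵥ x = (g ⬝ᵥ g - t * (y ⬝ᵥ g)) - t * (g ⬝ᵥ y - t * (y ⬝ᵥ y)) := by
        rw [hx, hlinR x g y t, hlinL g g y t, hlinL y g y t]
      rw [e1, hgg, hyg, hgy, hyy, ht]
      field_simp
      ring
    have hPSD := normLap_posSemidef G hL
    have key := rayleigh_second hL hPSD hcard hy0 hLy hyx
    rw [← hlam, hxx, hxLx] at key
    have hfin : lam2 * (w * (1 - w / m)) ≤ w - F := key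
    nlinarith [hfin]
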